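/- For every integer n ≥ 1, D^{n−1}(y·w) = ∑_{k=0}^{n−1} Q_{n,k}(0) · y^{n+k} · w^{n}, as an identity in the polynomial ring R = ℚ[a,x,y,w], where Q_{n,k}(0) ∈ ℚ denotes the evaluation of the polynomial Q_{n,k} at 0. -/

import Mathlib

open Polynomial

/-- The Ramanujan–Shor polynomials `Q n k ∈ ℚ[x]`. -/
noncomputable def ramanujanShorQ : ℕ → ℤ → Polynomial ℚ
  | 0, _ => 0
  | 1, k => if k = 0 then 1 else 0
  | (n + 2), k =>
      if 0 ≤ k ∧ k ≤ (n : ℤ) + 1 then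
        (Polynomial.X + Polynomial.C ((n : ℚ) + 1)) * ramanujanShorQ (n + 1) k
          + Polynomial.C (((n : ℤ) + k : ℤ) : ℚ) * ramanujanShorQ (n + 1) (k - 1)
      else 0

lemma Q_neg (n : ℕ) (k : ℤ) (hk : k < 0) : ramanujanShorQ n k = 0 := by
  match n with
  | 0 => rfl
  | 1 => simp [ramanujanShorQ]; omega
  | (m+2) => rw [ramanujanShorQ]; rw [if_neg]; omega

lemma Q_ge (n : ℕ) (k : ℤ) (hk : (n : ℤ) ≤ k) : ramanujanShorQ n k = 0 := by
  match n with
  | 0 => rfl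
  | 1 => simp [ramanujanShorQ]; omega
  | (m+2) => rw [ramanujanShorQ]; rw [if_neg]; push_cast at hk ⊢; omega

lemma e_rec (m : ℕ) (j : ℕ) (hj : (j : ℤ) ≤ (m : ℤ) + 1) :
    Polynomial.eval 0 (ramanujanShorQ (m+2) (j : ℤ))
      = ((m : ℚ) + 1) * Polynomial.eval 0 (ramanujanShorQ (m+1) (j : ℤ))
        + ((m : ℚ) + (j : ℚ)) * Polynomial.eval 0 (ramanujanShorQ (m+1) ((j : ℤ) - 1)) := by
  rw [ramanujanShorQ, if_pos ⟨Int.ofNat_nonneg j, hj⟩]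
  push_cast
  simp [eval_add, eval_mul]

open MvPolynomial in
lemma D_term (D : Derivation ℚ (MvPolynomial (Fin 4) ℚ) (MvPolynomial (Fin 4) ℚ))
    (hDy : D (X 2) = (X 2) ^ 3 * X 3)
    (hDw : D (X 3) = X 2 * (X 3) ^ 2)
    (p q : ℕ) (hp : 1 ≤ p) (hq : 1 ≤ q) :
    D ((X 2) ^ p * (X 3) ^ q)
      = p • ((X 2) ^ (p + 2) * (X 3) ^ (q + 1))
        + q • ((X 2) ^ (p + 1) * (X 3) ^ (q + 1)) := by
  obtain ⟨p, rfl⟩ : ∃ p', p = p' + 1 := ⟨p - 1, by omega⟩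
  obtain ⟨q, rfl⟩ : ∃ q', q = q' + 1 := ⟨q - 1, by omega⟩
  rw [Derivation.leibniz, Derivation.leibniz_pow, Derivation.leibniz_pow, hDy, hDw]
  simp only [nsmul_eq_mul, smul_eq_mul, Nat.add_sub_cancel]
  push_cast
  ring

open MvPolynomial in
theorem dn_yw (D : Derivation ℚ (MvPolynomial (Fin 4) ℚ) (MvPolynomial (Fin 4) ℚ))
    (hDa : D (X 0) = X 0 * X 1 * X 2)
    (hDx : D (X 1) = X 1 * X 2 * X 3)
    (hDy : D (X 2) = (X 2) ^ 3 * X 3)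
    (hDw : D (X 3) = X 2 * (X 3) ^ 2)
    (n : ℕ) (hn : 1 ≤ n) :
    (⇑D)^[n - 1] (X 2 * X 3)
      = ∑ k ∈ Finset.range n,
          MvPolynomial.C (Polynomial.eval 0 (ramanujanShorQ n (k : ℤ)))
            * (X 2) ^ (n + k) * (X 3) ^ n := by
  obtain ⟨m, rfl⟩ : ∃ m, n = m + 1 := ⟨n - 1, by omega⟩
  simp only [Nat.add_sub_cancel]
  induction m with
  | zero => simp [ramanujanShorQ]
  | succ m ih =>
    have IH := ih (by omega)
    rw [Function.iterate_succ_apply', IH, map_sum]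
    -- compute LHS
    have hL : ∀ k ∈ Finset.range (m + 1),
        D (MvPolynomial.C (Polynomial.eval 0 (ramanujanShorQ (m+1) (k : ℤ)))
            * (X 2) ^ (m + 1 + k) * (X 3) ^ (m + 1))
        = MvPolynomial.C (((m : ℚ) + 1 + k) * Polynomial.eval 0 (ramanujanShorQ (m+1) (k : ℤ)))
            * (X 2) ^ (m + 1 + k + 2) * ((X 3 : MvPolynomial (Fin 4) ℚ)) ^ (m + 2)
          + MvPolynomial.C (((m : ℚ) + 1) * Polynomial.eval 0 (ramanujanShorQ (m+1) (k : ℤ)))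
            * (X 2) ^ (m + 1 + k + 1) * ((X 3 : MvPolynomial (Fin 4) ℚ)) ^ (m + 2) := by
      intro k _
      rw [mul_assoc, ← MvPolynomial.smul_eq_C_mul, Derivation.map_smul,
        D_term D hDy hDw (m + 1 + k) (m + 1) (by omega) (by omega)]
      simp only [smul_add, nsmul_eq_mul, MvPolynomial.smul_eq_C_mul, map_mul, map_add,
        map_natCast, map_one]
      push_cast
      ring
    rw [Finset.sum_congr rfl hL, Finset.sum_add_distrib]
    have hmm : m + 1 + 1 = m + 2 := rfl
    rw [hmm]
    -- rewrite RHS using the recurrence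
    have hR : ∀ j ∈ Finset.range (m + 2),
        MvPolynomial.C (Polynomial.eval 0 (ramanujanShorQ (m+2) (j : ℤ)))
            * (X 2) ^ (m + 2 + j) * ((X 3 : MvPolynomial (Fin 4) ℚ)) ^ (m + 2)
        = MvPolynomial.C (((m : ℚ) + 1) * Polynomial.eval 0 (ramanujanShorQ (m+1) (j : ℤ)))
            * (X 2) ^ (m + 2 + j) * ((X 3 : MvPolynomial (Fin 4) ℚ)) ^ (m + 2)
          + MvPolynomial.C (((m : ℚ) + j) * Polynomial.eval 0 (ramanujanShorQ (m+1) ((j : ℤ) - 1)))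
            * (X 2) ^ (m + 2 + j) * ((X 3 : MvPolynomial (Fin 4) ℚ)) ^ (m + 2) := by
      intro j hj
      rw [e_rec m j (by simp at hj; omega)]
      simp only [map_add, map_mul]
      ring
    have hRsum : ∑ j ∈ Finset.range (m + 2),
        MvPolynomial.C (Polynomial.eval 0 (ramanujanShorQ (m+2) (j : ℤ)))
            * (X 2) ^ (m + 2 + j) * ((X 3 : MvPolynomial (Fin 4) ℚ)) ^ (m + 2)
      = (∑ j ∈ Finset.range (m + 2),
          MvPolynomial.C (((m : ℚ) + 1) * Polynomial.eval 0 (ramanujanShorQ (m+1) (j : ℤ)))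
            * (X 2) ^ (m + 2 + j) * ((X 3 : MvPolynomial (Fin 4) ℚ)) ^ (m + 2))
        + ∑ j ∈ Finset.range (m + 2),
          MvPolynomial.C (((m : ℚ) + j) * Polynomial.eval 0 (ramanujanShorQ (m+1) ((j : ℤ) - 1)))
            * (X 2) ^ (m + 2 + j) * ((X 3 : MvPolynomial (Fin 4) ℚ)) ^ (m + 2) := by
      rw [← Finset.sum_add_distrib]
      exact Finset.sum_congr rfl hR
    rw [hRsum]
    rw [add_comm (∑ j ∈ Finset.range (m + 2),
          MvPolynomial.C (((m : ℚ) + 1) * Polynomial.eval 0 (ramanujanShorQ (m+1) (j : ℤ)))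
            * (X 2) ^ (m + 2 + j) * ((X 3 : MvPolynomial (Fin 4) ℚ)) ^ (m + 2))]
    congr 1
    · -- second LHS sum = reindexed RHS sum with e(j-1)
      rw [Finset.sum_range_succ' (fun j => MvPolynomial.C (((m : ℚ) + j) * Polynomial.eval 0 (ramanujanShorQ (m+1) ((j : ℤ) - 1))) * (X 2) ^ (m + 2 + j) * ((X 3 : MvPolynomial (Fin 4) ℚ)) ^ (m + 2)) (m + 1)]
      rw [show ((0 : ℕ) : ℤ) - 1 = -1 by norm_num, Q_neg (m+1) (-1) (by norm_num)]
      simp only [Polynomial.eval_zero, mul_zero, map_zero, zero_mul, add_zero]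
      refine Finset.sum_congr rfl fun k _ => ?_
      push_cast
      rw [show ((k : ℤ) + 1 - 1) = (k : ℤ) by ring,
        show m + 2 + (k + 1) = m + 1 + k + 2 by ring]
      ring
    · -- first LHS sum = truncated RHS sum
      rw [Finset.sum_range_succ (fun j => MvPolynomial.C (((m : ℚ) + 1) * Polynomial.eval 0 (ramanujanShorQ (m+1) (j : ℤ))) * (X 2) ^ (m + 2 + j) * ((X 3 : MvPolynomial (Fin 4) ℚ)) ^ (m + 2)) (m + 1)]
      rw [Q_ge (m+1) (m+1 : ℕ) (by push_cast; omega)]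
      simp only [Polynomial.eval_zero, mul_zero, map_zero, zero_mul, add_zero]
      refine Finset.sum_congr rfl fun k _ => ?_
      rw [show m + 2 + k = m + 1 + k + 1 by ring]
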